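/- The function ψ(p) = (2p − sin 2p)/(8 sin²p) is strictly increasing on the interval (0, π); moreover ψ(p) → 0 as p → 0⁺ and ψ(p) → +∞ as p → π⁻. -/

import Mathlib

open Real Filter

noncomputable def ψ (p : ℝ) : ℝ := (2 * p - Real.sin (2 * p)) / (8 * Real.sin p ^ 2)

/-- key: sin p - p cos p > 0 on (0, π] -/
lemma key_pos {p : ℝ} (hp : p ∈ Set.Ioc 0 Real.pi) : 0 < Real.sin p - p * Real.cos p := by
  have hmono : StrictMonoOn (fun p : ℝ => Real.sin p - p * Real.cos p) (Set.Icc 0 Real.pi) := by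
    apply strictMonoOn_of_deriv_pos (convex_Icc 0 Real.pi)
    · exact (Real.continuous_sin.sub (continuous_id.mul Real.continuous_cos)).continuousOn
    · intro x hx
      rw [interior_Icc] at hx
      have hd : HasDerivAt (fun p : ℝ => Real.sin p - p * Real.cos p) (x * Real.sin x) x := by
        have := (Real.hasDerivAt_sin x).sub ((hasDerivAt_id x).mul (Real.hasDerivAt_cos x))
        refine this.congr_deriv ?_; simp only [id_eq]; ring
      rw [hd.deriv]
      exact mul_pos hx.1 (Real.sin_pos_of_pos_of_lt_pi hx.1 hx.2)
  have h0 : (0:ℝ) ∈ Set.Icc 0 Real.pi := ⟨le_refl 0, Real.pi_pos.le⟩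
  have hpmem : p ∈ Set.Icc 0 Real.pi := ⟨hp.1.le, hp.2⟩
  have := hmono h0 hpmem hp.1
  simpa using this

lemma psi_hasDeriv {p : ℝ} (hp : p ∈ Set.Ioo 0 Real.pi) :
    HasDerivAt ψ (((2 - Real.cos (2*p) * 2) * (8 * Real.sin p ^ 2)
      - (2 * p - Real.sin (2 * p)) * (8 * (2 * Real.sin p * Real.cos p)))
      / (8 * Real.sin p ^ 2) ^ 2) p := by
  have hs : Real.sin p ≠ 0 := (Real.sin_pos_of_pos_of_lt_pi hp.1 hp.2).ne'
  have h2p : HasDerivAt (fun q : ℝ => Real.sin (2 * q)) (Real.cos (2*p) * 2) p := by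
    have := (Real.hasDerivAt_sin (2*p)).comp p ((hasDerivAt_id p).const_mul 2)
    simpa [Function.comp_def] using this
  have hN : HasDerivAt (fun q : ℝ => 2 * q - Real.sin (2 * q)) (2 - Real.cos (2*p) * 2) p := by
    have := ((hasDerivAt_id p).const_mul 2).sub h2p
    simpa [Pi.sub_def] using this
  have hD : HasDerivAt (fun q : ℝ => 8 * Real.sin q ^ 2) (8 * (2 * Real.sin p * Real.cos p)) p := by
    have := ((Real.hasDerivAt_sin p).pow 2).const_mul 8
    simpa [mul_comm, mul_assoc, mul_left_comm] using this
  have hD0 : (8 : ℝ) * Real.sin p ^ 2 ≠ 0 := by positivity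
  exact hN.div hD hD0

lemma psi_deriv_pos {p : ℝ} (hp : p ∈ Set.Ioo 0 Real.pi) :
    0 < ((2 - Real.cos (2*p) * 2) * (8 * Real.sin p ^ 2)
      - (2 * p - Real.sin (2 * p)) * (8 * (2 * Real.sin p * Real.cos p)))
      / (8 * Real.sin p ^ 2) ^ 2 := by
  have hs : 0 < Real.sin p := Real.sin_pos_of_pos_of_lt_pi hp.1 hp.2
  have hkey : 0 < Real.sin p - p * Real.cos p := key_pos ⟨hp.1, hp.2.le⟩
  apply div_pos
  · have hc2 : Real.cos (2*p) = 1 - 2 * Real.sin p ^ 2 := by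
      have h := Real.sin_sq_add_cos_sq p
      rw [Real.cos_two_mul]; linarith
    have hs2 : Real.sin (2*p) = 2 * Real.sin p * Real.cos p := Real.sin_two_mul p
    rw [hc2, hs2]
    nlinarith [mul_pos hs hkey, Real.sin_sq_add_cos_sq p, sq_nonneg (Real.sin p), mul_pos hs hs]
  · positivity

lemma psi_mono : StrictMonoOn ψ (Set.Ioo 0 Real.pi) := by
  apply strictMonoOn_of_deriv_pos (convex_Ioo 0 Real.pi)
  · apply ContinuousOn.div
    · exact (continuous_const.mul continuous_id |>.sub (Real.continuous_sin.comp (continuous_const.mul continuous_id))).continuousOn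
    · exact (continuous_const.mul (Real.continuous_sin.pow 2)).continuousOn
    · intro x hx
      have : 0 < Real.sin x := Real.sin_pos_of_pos_of_lt_pi hx.1 hx.2
      positivity
  · intro x hx
    rw [interior_Ioo] at hx
    rw [(psi_hasDeriv hx).deriv]
    exact psi_deriv_pos hx

lemma psi_tendsto_zero : Filter.Tendsto ψ (nhdsWithin 0 (Set.Ioi 0)) (nhds 0) := by
  apply squeeze_zero' (g := fun p : ℝ => p)
  · filter_upwards [self_mem_nhdsWithin] with p hp
    have hp : (0:ℝ) < p := hp
    show (0:ℝ) ≤ (2 * p - Real.sin (2 * p)) / (8 * Real.sin p ^ 2)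
    apply div_nonneg
    · have := Real.sin_lt (by linarith : (0:ℝ) < 2 * p)
      linarith
    · positivity
  · filter_upwards [Ioo_mem_nhdsGT_of_mem (by norm_num : (0:ℝ) ∈ Set.Ico 0 (1/2))] with p hp
    obtain ⟨hp0, hp1⟩ := hp
    have h1 : p - p^3/4 < Real.sin p := by
      have := Real.sin_gt_sub_cube hp0; nlinarith [pow_pos hp0 3]
    have h2 : 2*p - (2*p)^3/4 < Real.sin (2*p) := by
      have := Real.sin_gt_sub_cube (by linarith : (0:ℝ) < 2*p); nlinarith [pow_pos hp0 3]
    have hs : 0 < Real.sin p := by nlinarith [mul_pos (mul_pos hp0 hp0) hp0]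
    show (2 * p - Real.sin (2 * p)) / (8 * Real.sin p ^ 2) ≤ p
    rw [div_le_iff₀ (by positivity)]
    have hsge : p/2 ≤ Real.sin p := by nlinarith [mul_pos (mul_pos hp0 hp0) hp0]
    have h4 : (p/2)^2 ≤ Real.sin p ^ 2 := by nlinarith
    have h5 := mul_le_mul_of_nonneg_left h4 (by positivity : (0:ℝ) ≤ 8*p)
    nlinarith [h5, h2, mul_pos (mul_pos hp0 hp0) hp0]
  · exact tendsto_id.mono_left nhdsWithin_le_nhds

lemma psi_tendsto_top : Filter.Tendsto ψ (nhdsWithin Real.pi (Set.Iio Real.pi)) Filter.atTop := by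
  have hN : Filter.Tendsto (fun p : ℝ => 2 * p - Real.sin (2 * p))
      (nhdsWithin Real.pi (Set.Iio Real.pi)) (nhds (2 * Real.pi)) := by
    have : Continuous (fun p : ℝ => 2 * p - Real.sin (2 * p)) := by continuity
    have h := (this.tendsto Real.pi).mono_left (nhdsWithin_le_nhds (s := Set.Iio Real.pi))
    simpa [Real.sin_two_pi] using h
  have hD : Filter.Tendsto (fun p : ℝ => 8 * Real.sin p ^ 2)
      (nhdsWithin Real.pi (Set.Iio Real.pi)) (nhdsWithin 0 (Set.Ioi 0)) := by
    apply tendsto_nhdsWithin_of_tendsto_nhds_of_eventually_within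
    · have : Continuous (fun p : ℝ => 8 * Real.sin p ^ 2) := by continuity
      have h := (this.tendsto Real.pi).mono_left (nhdsWithin_le_nhds (s := Set.Iio Real.pi))
      simpa using h
    · filter_upwards [Ioo_mem_nhdsLT_of_mem (⟨Real.pi_pos, le_refl _⟩ :
        Real.pi ∈ Set.Ioc 0 Real.pi)] with p hp
      have : 0 < Real.sin p := Real.sin_pos_of_pos_of_lt_pi hp.1 hp.2
      show (0:ℝ) < 8 * Real.sin p ^ 2
      positivity
  have hDinv : Filter.Tendsto (fun p : ℝ => (8 * Real.sin p ^ 2)⁻¹)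
      (nhdsWithin Real.pi (Set.Iio Real.pi)) Filter.atTop := hD.inv_tendsto_nhdsGT_zero
  have := hDinv.const_mul_atTop (by positivity : (0:ℝ) < 2 * Real.pi)
  have hmul := hN.pos_mul_atTop (by positivity : (0:ℝ) < 2 * Real.pi) hDinv
  refine hmul.congr (fun p => ?_)
  simp [ψ, div_eq_mul_inv]

theorem stmt14 :
    StrictMonoOn ψ (Set.Ioo 0 Real.pi) ∧
    Filter.Tendsto ψ (nhdsWithin 0 (Set.Ioi 0)) (nhds 0) ∧
    Filter.Tendsto ψ (nhdsWithin Real.pi (Set.Iio Real.pi)) Filter.atTop :=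
  ⟨psi_mono, psi_tendsto_zero, psi_tendsto_top⟩
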